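/- The Toads and Frogs position L T □ F R, where L is any finite sequence of T's and F's ending in F, and R is any finite sequence of T's and F's beginning with T, has game value * = {0 | 0}. -/

import Mathlib

universe u

namespace SetTheory

/-- Pre-games, as in the older Mathlib's `SetTheory.PGame` (removed from Mathlib since). -/
inductive PGame : Type (u + 1)
  | mk : ∀ α β : Type u, (α → PGame) → (β → PGame) → PGame

namespace PGame

/-- The pair (`x ≤ y`, `x ⧏ y`), defined by simultaneous recursion. -/
noncomputable def leLF : PGame.{u} → PGame.{u} → Prop × Prop :=
  PGame.rec (motive := fun _ => PGame.{u} → Prop × Prop) fun _ _ _ _ IHL IHR =>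
    PGame.rec (motive := fun _ => Prop × Prop) fun yl yr yL yR JL JR =>
      ((∀ i, (IHL i (mk yl yr yL yR)).2) ∧ ∀ j, (JR j).2,
        (∃ i, (JL i).1) ∨ ∃ j, (IHR j (mk yl yr yL yR)).1)

noncomputable instance : LE PGame.{u} := ⟨fun x y => (leLF x y).1⟩

/-- Equivalence of pre-games: `x ≤ y ∧ y ≤ x`. -/
def Equiv (x y : PGame.{u}) : Prop := x ≤ y ∧ y ≤ x

instance : HasEquiv PGame.{u} := ⟨Equiv⟩

instance : Zero PGame.{u} := ⟨⟨PEmpty, PEmpty, PEmpty.elim, PEmpty.elim⟩⟩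

/-- Negation of a pre-game. -/
def neg : PGame.{u} → PGame.{u}
  | ⟨l, r, L, R⟩ => ⟨r, l, fun i => neg (R i), fun i => neg (L i)⟩

instance : Neg PGame.{u} := ⟨neg⟩

/-- The game `* = {0 | 0}`. -/
def star : PGame.{u} := ⟨PUnit, PUnit, fun _ => 0, fun _ => 0⟩

end PGame

end SetTheory

open SetTheory

namespace SetTheory.PGame

def LeftMoves : PGame.{u} → Type u
  | mk l _ _ _ => l

def RightMoves : PGame.{u} → Type u
  | mk _ r _ _ => r

def moveLeft : (x : PGame.{u}) → x.LeftMoves → PGame.{u}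
  | mk _ _ L _ => L

def moveRight : (x : PGame.{u}) → x.RightMoves → PGame.{u}
  | mk _ _ _ R => R

def LF (x y : PGame.{u}) : Prop := (leLF x y).2

infix:50 " ⧏ " => SetTheory.PGame.LF

theorem le_iff_forall_lf {x y : PGame.{u}} :
    x ≤ y ↔ (∀ i, x.moveLeft i ⧏ y) ∧ ∀ j, x ⧏ y.moveRight j := by
  cases x; cases y; exact Iff.rfl

theorem lf_iff_exists_le {x y : PGame.{u}} :
    x ⧏ y ↔ (∃ i, x ≤ y.moveLeft i) ∨ ∃ j, x.moveRight j ≤ y := by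
  cases x; cases y; exact Iff.rfl

theorem lf_zero_le {x : PGame.{u}} : x ⧏ 0 ↔ ∃ j, x.moveRight j ≤ 0 := by
  rw [lf_iff_exists_le]
  exact ⟨fun h => h.resolve_left (fun ⟨i, _⟩ => PEmpty.elim i), Or.inr⟩

theorem zero_lf_le {x : PGame.{u}} : 0 ⧏ x ↔ ∃ i, 0 ≤ x.moveLeft i := by
  rw [lf_iff_exists_le]
  exact ⟨fun h => h.resolve_right (fun ⟨j, _⟩ => PEmpty.elim j), Or.inl⟩

theorem le_zero {x : PGame.{u}} : x ≤ 0 ↔ ∀ i, ∃ j, (x.moveLeft i).moveRight j ≤ 0 := by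
  rw [le_iff_forall_lf]
  constructor
  · intro h i; exact lf_zero_le.1 (h.1 i)
  · intro h; exact ⟨fun i => lf_zero_le.2 (h i), fun j => PEmpty.elim j⟩

theorem zero_le {x : PGame.{u}} : 0 ≤ x ↔ ∀ j, ∃ i, 0 ≤ (x.moveRight j).moveLeft i := by
  rw [le_iff_forall_lf]
  constructor
  · intro h j; exact zero_lf_le.1 (h.2 j)
  · intro h; exact ⟨fun i => PEmpty.elim i, fun j => zero_lf_le.2 (h j)⟩

theorem le_refl' : ∀ x : PGame.{u}, x ≤ x
  | mk _ _ xL xR => le_iff_forall_lf.2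
      ⟨fun i => lf_iff_exists_le.2 (Or.inl ⟨i, le_refl' (xL i)⟩),
       fun j => lf_iff_exists_le.2 (Or.inr ⟨j, le_refl' (xR j)⟩)⟩

theorem equiv_rfl {x : PGame.{u}} : x ≈ x := ⟨le_refl' x, le_refl' x⟩

theorem star_moveLeft (i : star.{u}.LeftMoves) : star.{u}.moveLeft i = 0 := rfl

theorem star_moveRight (j : star.{u}.RightMoves) : star.{u}.moveRight j = 0 := rfl

end SetTheory.PGame

inductive Cell : Type
  | T | F | E
deriving DecidableEq

/-- Positions reachable from `l` by a single Toad (Left) move: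
a Toad steps right into an empty square, or jumps over one adjacent Frog
into the empty square beyond. -/
def toadMoves : List Cell → List (List Cell)
  | [] => []
  | c :: rest =>
    (match c, rest with
     | Cell.T, Cell.E :: r => [Cell.E :: Cell.T :: r]
     | Cell.T, Cell.F :: Cell.E :: r => [Cell.E :: Cell.F :: Cell.T :: r]
     | _, _ => []) ++ (toadMoves rest).map (c :: ·)

/-- Positions reachable from `l` by a single Frog (Right) move. -/
def frogMoves : List Cell → List (List Cell)
  | [] => []
  | c :: rest =>
    (match c, rest with
     | Cell.E, Cell.F :: r => [Cell.F :: Cell.E :: r]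
     | Cell.E, Cell.T :: Cell.F :: r => [Cell.F :: Cell.T :: Cell.E :: r]
     | _, _ => []) ++ (frogMoves rest).map (c :: ·)

/-- A weight which strictly decreases with every legal move: each Toad
contributes the number of squares strictly to its right, each Frog the number
of squares strictly to its left. -/
def wt : List Cell → ℕ
  | [] => 0
  | c :: rest =>
    (if c = Cell.T then rest.length else 0) + rest.countP (· = Cell.F) + wt rest

/-- Game tree with fuel; since `wt` strictly decreases along moves and
positions of weight `0` have no moves, `gameAux n l` is the true game
tree of `l` whenever `wt l ≤ n`. -/
def gameAux : ℕ → List Cell → PGame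
  | 0, _ => 0
  | n + 1, l =>
    PGame.mk {m // m ∈ toadMoves l} {m // m ∈ frogMoves l}
      (fun m => gameAux n m.1) (fun m => gameAux n m.1)

/-- The game (PGame) associated to a Toads and Frogs position. -/
def tfGame (l : List Cell) : PGame := gameAux (wt l + 1) l

/-- The game `{x | y}` with a single Left option `x` and single Right option `y`. -/
def gmk (x y : PGame) : PGame :=
  PGame.mk PUnit PUnit (fun _ => x) (fun _ => y)

/-- The canonical game of a natural number. -/
def natGame : ℕ → PGame
  | 0 => 0
  | n + 1 => PGame.mk PUnit PEmpty (fun _ => natGame n) (fun x => x.elim)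

/-- The canonical game of an integer. -/
def intGame : ℤ → PGame
  | Int.ofNat n => natGame n
  | Int.negSucc n => -natGame (n + 1)

/-- `(TF)^b` : the block `TF` repeated `b` times. -/
def tfBlock (b : ℕ) : List Cell := (List.replicate b [Cell.T, Cell.F]).flatten

lemma toadMoves_cons (c : Cell) (rest : List Cell) : toadMoves (c :: rest) =
    (match c, rest with
     | Cell.T, Cell.E :: r => [Cell.E :: Cell.T :: r]
     | Cell.T, Cell.F :: Cell.E :: r => [Cell.E :: Cell.F :: Cell.T :: r]
     | _, _ => []) ++ (toadMoves rest).map (c :: ·) := by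
  rcases c with _|_|_ <;> rcases rest with _|⟨_|_|_, _|⟨_|_|_, r⟩⟩ <;> rfl

lemma frogMoves_cons (c : Cell) (rest : List Cell) : frogMoves (c :: rest) =
    (match c, rest with
     | Cell.E, Cell.F :: r => [Cell.F :: Cell.E :: r]
     | Cell.E, Cell.T :: Cell.F :: r => [Cell.F :: Cell.T :: Cell.E :: r]
     | _, _ => []) ++ (frogMoves rest).map (c :: ·) := by
  rcases c with _|_|_ <;> rcases rest with _|⟨_|_|_, _|⟨_|_|_, r⟩⟩ <;> rfl

lemma toadMoves_nil {l : List Cell} (h : Cell.E ∉ l) : toadMoves l = [] := by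
  induction l with
  | nil => rfl
  | cons c rest ih =>
    simp only [List.mem_cons, not_or] at h
    rw [toadMoves_cons, ih h.2, List.map_nil, List.append_nil]
    rcases c with _|_|_ <;> rcases rest with _|⟨_|_|_, _|⟨_|_|_, r⟩⟩ <;> simp_all

lemma frogMoves_nil {l : List Cell} (h : Cell.E ∉ l) : frogMoves l = [] := by
  induction l with
  | nil => rfl
  | cons c rest ih =>
    simp only [List.mem_cons, not_or] at h
    rw [frogMoves_cons, ih h.2, List.map_nil, List.append_nil]
    rcases c with _|_|_ <;> rcases rest with _|⟨_|_|_, _|⟨_|_|_, r⟩⟩ <;> simp_all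

lemma toad_spec : ∀ {l m : List Cell}, m ∈ toadMoves l →
    m.length = l.length ∧ m.countP (· = Cell.F) = l.countP (· = Cell.F) ∧ wt m < wt l := by
  intro l
  induction l with
  | nil => intro m hm; simp [toadMoves] at hm
  | cons c rest ih =>
    intro m hm
    rw [toadMoves_cons, List.mem_append] at hm
    rcases hm with hm | hm
    · rcases c with _|_|_ <;> rcases rest with _|⟨_|_|_, _|⟨_|_|_, r⟩⟩ <;>
        simp_all [wt, List.countP_cons] <;> omega
    · obtain ⟨m', hm', rfl⟩ := List.mem_map.1 hm
      obtain ⟨h1, h2, h3⟩ := ih hm'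
      refine ⟨by simp [h1], by simp [List.countP_cons, h2], ?_⟩
      show (if c = Cell.T then m'.length else 0) + m'.countP (· = Cell.F) + wt m' <
        (if c = Cell.T then rest.length else 0) + rest.countP (· = Cell.F) + wt rest
      rw [h1, h2]
      exact Nat.add_lt_add_left h3 _

lemma frog_spec : ∀ {l m : List Cell}, m ∈ frogMoves l →
    m.length = l.length ∧ m.countP (· = Cell.F) = l.countP (· = Cell.F) ∧ wt m < wt l := by
  intro l
  induction l with
  | nil => intro m hm; simp [frogMoves] at hm
  | cons c rest ih =>
    intro m hm
    rw [frogMoves_cons, List.mem_append] at hm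
    rcases hm with hm | hm
    · rcases c with _|_|_ <;> rcases rest with _|⟨_|_|_, _|⟨_|_|_, r⟩⟩ <;>
        simp_all [wt, List.countP_cons] <;> omega
    · obtain ⟨m', hm', rfl⟩ := List.mem_map.1 hm
      obtain ⟨h1, h2, h3⟩ := ih hm'
      refine ⟨by simp [h1], by simp [List.countP_cons, h2], ?_⟩
      show (if c = Cell.T then m'.length else 0) + m'.countP (· = Cell.F) + wt m' <
        (if c = Cell.T then rest.length else 0) + rest.countP (· = Cell.F) + wt rest
      rw [h1, h2]
      exact Nat.add_lt_add_left h3 _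

lemma mem_toad_step : ∀ (a b : List Cell),
    (a ++ Cell.E :: Cell.T :: b) ∈ toadMoves (a ++ Cell.T :: Cell.E :: b)
  | [], b => by rw [List.nil_append, List.nil_append, toadMoves_cons]; exact List.mem_append_left _ (List.mem_singleton.2 rfl)
  | c :: a, b => by
    rw [List.cons_append, List.cons_append, toadMoves_cons, List.mem_append]
    exact Or.inr (List.mem_map.2 ⟨_, mem_toad_step a b, rfl⟩)

lemma mem_frog_step : ∀ (a b : List Cell),
    (a ++ Cell.F :: Cell.E :: b) ∈ frogMoves (a ++ Cell.E :: Cell.F :: b)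
  | [], b => by rw [List.nil_append, List.nil_append, frogMoves_cons]; exact List.mem_append_left _ (List.mem_singleton.2 rfl)
  | c :: a, b => by
    rw [List.cons_append, List.cons_append, frogMoves_cons, List.mem_append]
    exact Or.inr (List.mem_map.2 ⟨_, mem_frog_step a b, rfl⟩)

lemma toad_mem : ∀ {c : List Cell} {d m : List Cell}, Cell.E ∉ c → Cell.E ∉ d →
    m ∈ toadMoves (c ++ Cell.E :: d) →
    (∃ c', c = c' ++ [Cell.T] ∧ m = c' ++ Cell.E :: Cell.T :: d) ∨
    (∃ c', c = c' ++ [Cell.T, Cell.F] ∧ m = c' ++ Cell.E :: Cell.F :: Cell.T :: d) := by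
  intro c
  induction c with
  | nil =>
    intro d m _ hd hm
    rw [List.nil_append, toadMoves_cons, toadMoves_nil hd] at hm
    simp at hm
  | cons a c ih =>
    intro d m ha hd hm
    simp only [List.mem_cons, not_or] at ha
    rw [List.cons_append, toadMoves_cons, List.mem_append] at hm
    rcases hm with hm | hm
    · rcases a with _|_|_ <;> rcases c with _|⟨_|_|_, _|⟨_|_|_, r⟩⟩ <;> simp_all <;>
      first
        | exact Or.inl ⟨[], by simp, by simp [hm]⟩
        | exact Or.inr ⟨[], by simp, by simp [hm]⟩
    · obtain ⟨m', hm', rfl⟩ := List.mem_map.1 hm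
      rcases ih ha.2 hd hm' with ⟨c', h1, h2⟩ | ⟨c', h1, h2⟩
      · exact Or.inl ⟨a :: c', by simp [h1], by simp [h2]⟩
      · exact Or.inr ⟨a :: c', by simp [h1], by simp [h2]⟩

lemma frog_mem : ∀ {c : List Cell} {d m : List Cell}, Cell.E ∉ c → Cell.E ∉ d →
    m ∈ frogMoves (c ++ Cell.E :: d) →
    (∃ d', d = Cell.F :: d' ∧ m = c ++ Cell.F :: Cell.E :: d') ∨
    (∃ d', d = Cell.T :: Cell.F :: d' ∧ m = c ++ Cell.F :: Cell.T :: Cell.E :: d') := by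
  intro c
  induction c with
  | nil =>
    intro d m _ hd hm
    rw [List.nil_append, frogMoves_cons, frogMoves_nil hd] at hm
    simp only [List.map_nil, List.append_nil] at hm
    rcases d with _|⟨_|_|_, _|⟨_|_|_, r⟩⟩ <;> simp_all <;>
    first
      | exact Or.inl ⟨_, rfl, by simp [hm]⟩
      | exact Or.inr ⟨_, rfl, by simp [hm]⟩
  | cons a c ih =>
    intro d m ha hd hm
    simp only [List.mem_cons, not_or] at ha
    rw [List.cons_append, frogMoves_cons, List.mem_append] at hm
    rcases hm with hm | hm
    · exfalso
      rcases a with _|_|_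
      · simp at hm
      · simp at hm
      · exact ha.1 rfl
    · obtain ⟨m', hm', rfl⟩ := List.mem_map.1 hm
      rcases ih ha.2 hd hm' with ⟨d', h1, h2⟩ | ⟨d', h1, h2⟩
      · exact Or.inl ⟨d', h1, by simp [h2]⟩
      · exact Or.inr ⟨d', h1, by simp [h2]⟩

lemma Zlemma : ∀ n (c d : List Cell), Cell.E ∉ c → Cell.E ∉ d →
    (c = [] ∨ c.getLast? = some Cell.F) → (d = [] ∨ d.head? = some Cell.T) →
    wt (c ++ Cell.E :: d) ≤ n → (gameAux n (c ++ Cell.E :: d)) ≈ 0 := by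
  intro n
  induction n using Nat.strong_induction_on with
  | _ n IH =>
    intro c d hc hd hcl hdh hwt
    match n with
    | 0 => exact PGame.equiv_rfl
    | Nat.succ n =>
      constructor
      · rw [PGame.le_zero]
        intro i
        obtain ⟨m, hm⟩ := i
        show ∃ j : (gameAux n m).RightMoves, (gameAux n m).moveRight j ≤ 0
        rcases toad_mem hc hd hm with ⟨c', h1, h2⟩ | ⟨c', h1, h2⟩
        · exfalso
          rcases hcl with hcl | hcl
          · rw [hcl] at h1; exact List.cons_ne_nil _ _ (List.append_eq_nil_iff.mp h1.symm).2
          · rw [h1, List.getLast?_concat] at hcl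
            exact Cell.noConfusion (Option.some.inj hcl)
        · have hcE' : Cell.E ∉ c' := fun h => hc (h1 ▸ List.mem_append_left _ h)
          have hy : (c' ++ Cell.F :: Cell.E :: Cell.T :: d) ∈ frogMoves m := by
            rw [h2]; exact mem_frog_step c' (Cell.T :: d)
          have hwm : wt m < wt (c ++ Cell.E :: d) := (toad_spec hm).2.2
          have hwy : wt (c' ++ Cell.F :: Cell.E :: Cell.T :: d) < wt m := (frog_spec hy).2.2
          obtain ⟨n1, rfl⟩ := Nat.exists_eq_succ_of_ne_zero (n := n) (by omega)
          · refine ⟨⟨_, hy⟩, ?_⟩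
            show gameAux n1 (c' ++ Cell.F :: Cell.E :: Cell.T :: d) ≤ 0
            have e : (c' ++ [Cell.F]) ++ Cell.E :: (Cell.T :: d)
                = c' ++ Cell.F :: Cell.E :: Cell.T :: d := by simp
            refine (e ▸ (IH n1 (by omega) (c' ++ [Cell.F]) (Cell.T :: d)
              (by simp [hcE']) (by simp [hd])
              (Or.inr List.getLast?_concat) (Or.inr rfl) ?_)).1
            rw [e]; omega
      · rw [PGame.zero_le]
        intro j
        obtain ⟨m, hm⟩ := j
        show ∃ i : (gameAux n m).LeftMoves, 0 ≤ (gameAux n m).moveLeft i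
        rcases frog_mem hc hd hm with ⟨d', h1, h2⟩ | ⟨d', h1, h2⟩
        · exfalso
          rcases hdh with hdh | hdh
          · rw [hdh] at h1; exact List.cons_ne_nil _ _ h1.symm
          · rw [h1] at hdh
            exact Cell.noConfusion (Option.some.inj hdh)
        · have hdE' : Cell.E ∉ d' := fun h => hd (h1 ▸ by simp [h])
          have hy : ((c ++ [Cell.F]) ++ Cell.E :: Cell.T :: d') ∈ toadMoves m := by
            rw [h2]
            have e2 : (c ++ [Cell.F]) ++ Cell.T :: Cell.E :: d'
                = c ++ Cell.F :: Cell.T :: Cell.E :: d' := by simp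
            exact e2 ▸ mem_toad_step (c ++ [Cell.F]) d'
          have hwm : wt m < wt (c ++ Cell.E :: d) := (frog_spec hm).2.2
          have hwy : wt ((c ++ [Cell.F]) ++ Cell.E :: Cell.T :: d') < wt m :=
            (toad_spec hy).2.2
          obtain ⟨n1, rfl⟩ := Nat.exists_eq_succ_of_ne_zero (n := n) (by omega)
          · refine ⟨⟨_, hy⟩, ?_⟩
            show 0 ≤ gameAux n1 ((c ++ [Cell.F]) ++ Cell.E :: Cell.T :: d')
            exact (IH n1 (by omega) (c ++ [Cell.F]) (Cell.T :: d')
              (by simp [hc]) (by simp [hdE'])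
              (Or.inr List.getLast?_concat) (Or.inr rfl) (by omega)).2

open PGame in
/-- `L T □ F R = *` for any `{T,F}`-string `L` ending in `F` and
any `{T,F}`-string `R` beginning with `T`. -/
theorem LTboxFR_eq_star (L R : List Cell)
    (hLE : Cell.E ∉ L) (hRE : Cell.E ∉ R)
    (hL : L.getLast? = some Cell.F) (hR : R.head? = some Cell.T) :
    tfGame (L ++ [Cell.T, Cell.E, Cell.F] ++ R) ≈ PGame.star := by
  have e : L ++ [Cell.T, Cell.E, Cell.F] ++ R
      = (L ++ [Cell.T]) ++ Cell.E :: (Cell.F :: R) := by simp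
  rw [tfGame, e]
  set N := wt ((L ++ [Cell.T]) ++ Cell.E :: (Cell.F :: R)) with hN
  have hcE : Cell.E ∉ L ++ [Cell.T] := by simp [hLE]
  have hdE : Cell.E ∉ Cell.F :: R := by simp [hRE]
  have hLopt : ∀ m, m ∈ toadMoves ((L ++ [Cell.T]) ++ Cell.E :: (Cell.F :: R)) →
      gameAux N m ≈ 0 := by
    intro m hm
    rcases toad_mem hcE hdE hm with ⟨c', h1, h2⟩ | ⟨c', h1, h2⟩
    · obtain rfl : L = c' := List.append_cancel_right h1
      rw [h2]
      exact Zlemma N L (Cell.T :: Cell.F :: R) hLE (by simp [hRE]) (Or.inr hL) (Or.inr rfl)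
        (by have h3 := (toad_spec hm).2.2; rw [h2] at h3; omega)
    · exfalso
      have h3 : (L ++ [Cell.T]).getLast? = some Cell.T := List.getLast?_concat
      rw [h1, show c' ++ [Cell.T, Cell.F] = (c' ++ [Cell.T]) ++ [Cell.F] by simp,
        List.getLast?_concat] at h3
      exact Cell.noConfusion (Option.some.inj h3)
  have hRopt : ∀ m, m ∈ frogMoves ((L ++ [Cell.T]) ++ Cell.E :: (Cell.F :: R)) →
      gameAux N m ≈ 0 := by
    intro m hm
    rcases frog_mem hcE hdE hm with ⟨d', h1, h2⟩ | ⟨d', h1, h2⟩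
    · obtain rfl : R = d' := by injection h1
      have e3 : (L ++ [Cell.T, Cell.F]) ++ Cell.E :: R
          = (L ++ [Cell.T]) ++ Cell.F :: Cell.E :: R := by simp
      rw [h2, ← e3]
      exact Zlemma N (L ++ [Cell.T, Cell.F]) R (by simp [hLE]) hRE
        (Or.inr (by rw [show L ++ [Cell.T, Cell.F] = (L ++ [Cell.T]) ++ [Cell.F] by simp,
          List.getLast?_concat])) (Or.inr hR)
        (by rw [e3, ← h2]; have h3 := (frog_spec hm).2.2; omega)
    · exfalso
      injection h1 with h _
      exact Cell.noConfusion h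
  constructor
  · rw [PGame.le_iff_forall_lf]
    constructor
    · intro i
      obtain ⟨m, hm⟩ := i
      show gameAux N m ⧏ PGame.star
      rw [PGame.lf_iff_exists_le]
      exact Or.inl ⟨PUnit.unit, (hLopt m hm).1⟩
    · intro j
      rw [PGame.star_moveRight, PGame.lf_zero_le]
      refine ⟨⟨(L ++ [Cell.T]) ++ Cell.F :: Cell.E :: R, mem_frog_step _ _⟩, ?_⟩
      show gameAux N ((L ++ [Cell.T]) ++ Cell.F :: Cell.E :: R) ≤ 0
      exact (hRopt _ (mem_frog_step _ _)).1
  · rw [PGame.le_iff_forall_lf]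
    constructor
    · intro i
      rw [PGame.star_moveLeft, PGame.zero_lf_le]
      have hmem : (L ++ Cell.E :: Cell.T :: (Cell.F :: R))
          ∈ toadMoves ((L ++ [Cell.T]) ++ Cell.E :: (Cell.F :: R)) := by
        have e4 : L ++ Cell.T :: Cell.E :: (Cell.F :: R)
            = (L ++ [Cell.T]) ++ Cell.E :: (Cell.F :: R) := by simp
        exact e4 ▸ mem_toad_step L (Cell.F :: R)
      refine ⟨⟨_, hmem⟩, ?_⟩
      show 0 ≤ gameAux N (L ++ Cell.E :: Cell.T :: (Cell.F :: R))
      exact (hLopt _ hmem).2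
    · intro j
      obtain ⟨m, hm⟩ := j
      show PGame.star ⧏ gameAux N m
      rw [PGame.lf_iff_exists_le]
      exact Or.inr ⟨PUnit.unit, (hRopt m hm).2⟩
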